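/- arXiv:1510.03522 — 3 statements merged into one kernel-verified Lean document; each statement's English description precedes it below -/
import Mathlib

section
/- Let K ≥ 1 and let h : [0,T] → ℝ be a nonnegative differentiable function satisfying h'(t) ≤ -h(t)² + K² for all t ∈ [0,T], with arbitrary initial value h(0) ≥ 0. Then for all t ∈ [T/2, T], h(t) ≤ K·(1 + 2/(e^T - 1)). -/
open Real Set

/-- Riccati-type differential inequality: uniform-in-initial-data bound after time T/2. -/
theorem stmt_0 (T K : ℝ) (hT : 0 < T) (hK : 1 ≤ K)
    (h h' : ℝ → ℝ)
    (hderiv : ∀ t ∈ Icc 0 T, HasDerivAt h (h' t) t)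
    (hnonneg : ∀ t ∈ Icc 0 T, 0 ≤ h t)
    (hineq : ∀ t ∈ Icc 0 T, h' t ≤ -(h t) ^ 2 + K ^ 2) :
    ∀ t ∈ Icc (T / 2) T, h t ≤ K * (1 + 2 / (Real.exp T - 1)) := by
  have hK0 : (0:ℝ) < K := lt_of_lt_of_le one_pos hK
  have hE1 : (0:ℝ) < Real.exp T - 1 := by nlinarith [Real.add_one_le_exp T]
  set B := K * (1 + 2 / (Real.exp T - 1)) with hBdef
  have hBsub : B - K = 2 * K / (Real.exp T - 1) := by
    rw [hBdef]; field_simp; ring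
  have hBK : K < B := by
    have h2 : 0 < 2 * K / (Real.exp T - 1) := by positivity
    linarith
  have hsub : Icc (0:ℝ) (T/2) ⊆ Icc 0 T := Icc_subset_Icc le_rfl (by linarith)
  have hcont : ContinuousOn h (Icc 0 T) := fun x hx =>
    (hderiv x hx).continuousAt.continuousWithinAt
  -- Step 1: there is a time s ≤ T/2 with h s ≤ B
  have hstep1 : ∃ s ∈ Icc (0:ℝ) (T/2), h s ≤ B := by
    by_contra hcon
    push_neg at hcon
    have hd : ∀ x ∈ Icc (0:ℝ) (T/2), 0 < h x - K := fun x hx => by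
      have := hcon x hx; linarith
    set v : ℝ → ℝ := fun u => Real.exp (-(2*K)*u) * ((h u - K)⁻¹ + 1/(2*K)) with hvdef
    set V : ℝ → ℝ := fun u => (Real.exp (-(2*K)*u) * (-(2*K))) * ((h u - K)⁻¹ + 1/(2*K))
      + Real.exp (-(2*K)*u) * (-(h' u)/(h u - K)^2) with hVdef
    have hvd : ∀ x ∈ Icc (0:ℝ) (T/2), HasDerivAt v (V x) x := by
      intro x hx
      have he : HasDerivAt (fun u => Real.exp (-(2*K)*u)) (Real.exp (-(2*K)*x) * (-(2*K))) x := by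
        simpa using ((hasDerivAt_id x).const_mul (-(2*K))).exp
      have hw : HasDerivAt (fun u => (h u - K)⁻¹ + 1/(2*K)) (-(h' x)/(h x - K)^2) x := by
        exact (((hderiv x (hsub hx)).sub_const K).inv (hd x hx).ne').add_const _
      exact he.mul hw
    have hkey : ∀ x ∈ Icc (0:ℝ) (T/2), 0 ≤ V x := by
      intro x hx
      have hdx := hd x hx
      have hh' := hineq x (hsub hx)
      have h2 : (h x - K)^2 + 2*K*(h x - K) ≤ -(h' x) := by nlinarith
      have hVeq : V x = Real.exp (-(2*K)*x) *
          ((-(h' x) - ((h x - K)^2 + 2*K*(h x - K))) / (h x - K)^2) := by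
        rw [hVdef]
        field_simp
        ring
      rw [hVeq]
      apply mul_nonneg (Real.exp_pos _).le
      apply div_nonneg (by linarith) (sq_nonneg _)
    have hmono : MonotoneOn v (Icc (0:ℝ) (T/2)) := by
      apply monotoneOn_of_deriv_nonneg (convex_Icc _ _)
      · exact fun x hx => (hvd x hx).continuousAt.continuousWithinAt
      · intro x hx
        rw [interior_Icc] at hx
        exact ((hvd x (Ioo_subset_Icc_self hx)).differentiableAt).differentiableWithinAt
      · intro x hx
        rw [interior_Icc] at hx
        rw [(hvd x (Ioo_subset_Icc_self hx)).deriv]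
        exact hkey x (Ioo_subset_Icc_self hx)
    have h0mem : (0:ℝ) ∈ Icc (0:ℝ) (T/2) := ⟨le_rfl, by linarith⟩
    have hTmem : T/2 ∈ Icc (0:ℝ) (T/2) := ⟨by linarith, le_rfl⟩
    have hv01 := hmono h0mem hTmem (by linarith)
    have hv0 : 1/(2*K) ≤ v 0 := by
      have h0 : v 0 = (h 0 - K)⁻¹ + 1/(2*K) := by simp [hvdef]
      rw [h0]
      have : 0 ≤ (h 0 - K)⁻¹ := (inv_pos.mpr (hd 0 h0mem)).le
      linarith
    -- from monotonicity: exp(-K T) * ((h(T/2)-K)⁻¹ + 1/(2K)) ≥ 1/(2K)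
    have hvT : 1/(2*K) ≤ Real.exp (-(K*T)) * ((h (T/2) - K)⁻¹ + 1/(2*K)) := by
      have : v (T/2) = Real.exp (-(K*T)) * ((h (T/2) - K)⁻¹ + 1/(2*K)) := by
        simp only [hvdef]
        rw [show -(2*K)*(T/2) = -(K*T) by ring]
      rw [this] at hv01
      linarith
    have hmul := mul_le_mul_of_nonneg_left hvT (Real.exp_pos (K*T)).le
    rw [← mul_assoc, ← Real.exp_add] at hmul
    simp only [add_neg_cancel, Real.exp_zero, one_mul] at hmul
    -- so (h(T/2)-K)⁻¹ + 1/(2K) ≥ exp(K T)/(2K) ≥ exp T/(2K)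
    have hexpKT : Real.exp T ≤ Real.exp (K*T) := Real.exp_le_exp.mpr (by nlinarith)
    -- but (h(T/2)-K)⁻¹ < (B-K)⁻¹ = (exp T - 1)/(2K)
    have hTB := hcon (T/2) hTmem
    have hinv : (h (T/2) - K)⁻¹ < (B - K)⁻¹ := by
      apply inv_strictAnti₀ (by linarith) (by linarith)
    have hBKinv : (B - K)⁻¹ = (Real.exp T - 1)/(2*K) := by
      rw [hBsub]
      field_simp
    rw [hBKinv] at hinv
    have hc : (0:ℝ) < 1/(2*K) := by positivity
    rw [div_eq_mul_one_div (Real.exp T - 1) (2*K)] at hinv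
    nlinarith [mul_le_mul_of_nonneg_right hexpKT hc.le]
  obtain ⟨s, hs, hsB⟩ := hstep1
  -- Step 2: invariance: h stays ≤ B on [s, T]
  intro t ht
  by_contra hcontra
  push_neg at hcontra
  have hst : s ≤ t := le_trans hs.2 ht.1
  have hsT : s ∈ Icc (0:ℝ) T := hsub hs
  have htT : t ∈ Icc (0:ℝ) T := ⟨le_trans hsT.1 hst, ht.2⟩
  set S := {u : ℝ | u ∈ Icc s t ∧ h u ≤ B} with hSdef
  have hSclosed : IsClosed S := by
    have : S = Icc s t ∩ h ⁻¹' (Iic B) := by ext u; simp [hSdef, and_comm]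
    rw [this]
    apply ContinuousOn.preimage_isClosed_of_isClosed
      (hcont.mono (Icc_subset_Icc hsT.1 htT.2)) isClosed_Icc isClosed_Iic
  have hSne : S.Nonempty := ⟨s, ⟨le_rfl, hst⟩, hsB⟩
  have hSbdd : BddAbove S := BddAbove.mono (fun u hu => hu.1) bddAbove_Icc
  set s₁ := sSup S with hs₁def
  have hs₁mem : s₁ ∈ S := hSclosed.csSup_mem hSne hSbdd
  have hs₁t : s₁ < t := by
    rcases lt_or_eq_of_le hs₁mem.1.2 with h1 | h1
    · exact h1
    · exfalso; have := hs₁mem.2; rw [h1] at this; linarith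
  have hgt : ∀ u ∈ Ioc s₁ t, B < h u := by
    intro u hu
    by_contra hle
    push_neg at hle
    have : u ∈ S := ⟨⟨le_trans hs₁mem.1.1 hu.1.le, hu.2⟩, hle⟩
    have := le_csSup hSbdd this
    linarith [hu.1]
  have hanti : StrictAntiOn h (Icc s₁ t) := by
    apply strictAntiOn_of_deriv_neg (convex_Icc _ _)
    · exact hcont.mono (Icc_subset_Icc (le_trans hsT.1 hs₁mem.1.1) htT.2)
    · intro x hx
      rw [interior_Icc] at hx
      have hxT : x ∈ Icc (0:ℝ) T :=
        ⟨le_trans (le_trans hsT.1 hs₁mem.1.1) hx.1.le, le_trans hx.2.le htT.2⟩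
      rw [(hderiv x hxT).deriv]
      have hBx := hgt x ⟨hx.1, hx.2.le⟩
      have := hineq x hxT
      nlinarith
  have := hanti (left_mem_Icc.mpr hs₁t.le) (right_mem_Icc.mpr hs₁t.le) hs₁t
  have := hs₁mem.2
  linarith
end

section
/- Let K ≥ 1 and let g solve g'(t) = -g(t)² + K² on [0,T] with g(0) > K. Then for all t ∈ [T/2, T], g(t) ≤ K·(1 + 2·(e^T - 1)^{-1}). -/
open Real Set

/-- Bound for solutions of the Riccati equation started above the equilibrium K. -/
theorem stmt_2 (T K : ℝ) (hT : 0 < T) (hK : 1 ≤ K) (g : ℝ → ℝ)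
    (hderiv : ∀ t ∈ Icc 0 T, HasDerivAt g (-(g t) ^ 2 + K ^ 2) t)
    (hg0 : K < g 0) :
    ∀ t ∈ Icc (T / 2) T, g t ≤ K * (1 + 2 * (Real.exp T - 1)⁻¹) := by
  have hgc : ContinuousOn g (Icc 0 T) := fun x hx =>
    (hderiv x hx).continuousAt.continuousWithinAt
  set f : ℝ → ℝ := fun s => g s + K with hf
  have hfc : ContinuousOn f (Icc 0 T) := hgc.add continuousOn_const
  have hfint : ∀ x ∈ Icc (0:ℝ) T, IntervalIntegrable f MeasureTheory.volume 0 x := by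
    intro x hx
    apply ContinuousOn.intervalIntegrable
    apply hfc.mono
    rw [uIcc_of_le hx.1]
    exact Icc_subset_Icc le_rfl hx.2
  set F : ℝ → ℝ := fun t => ∫ s in (0:ℝ)..t, f s with hFdef
  have hFc : ContinuousOn F (Icc 0 T) := by
    have := intervalIntegral.continuousOn_primitive_interval
      (μ := MeasureTheory.volume) (f := f) (a := (0:ℝ)) (b := T)
      (by
        rw [uIcc_of_le hT.le]
        exact (hfc.integrableOn_compact isCompact_Icc))
    rwa [uIcc_of_le hT.le] at this
  -- derivative of F within Ici x for x ∈ Ico 0 T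
  have hFderiv : ∀ x ∈ Ico (0:ℝ) T, HasDerivWithinAt F (f x) (Ici x) x := by
    intro x hx
    have hmem : Icc 0 T ∈ nhdsWithin x (Ioi x) := by
      apply mem_nhdsWithin.mpr
      exact ⟨Iio T, isOpen_Iio, hx.2, fun y hy => ⟨le_trans hx.1 hy.2.le, hy.1.le⟩⟩
    refine intervalIntegral.integral_hasDerivWithinAt_right (t := Ioi x)
      (hfint x ⟨hx.1, hx.2.le⟩)
      ⟨Icc 0 T, hmem, (hfc.aestronglyMeasurable measurableSet_Icc)⟩ ?_
    exact ((hderiv x ⟨hx.1, hx.2.le⟩).continuousAt.add continuousAt_const).continuousWithinAt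
  -- Step A: g stays above K, via the integrating factor exp (F t)
  have hA : ∀ t ∈ Icc (0:ℝ) T, (g t - K) * Real.exp (F t) = g 0 - K := by
    have hcont : ContinuousOn (fun t => (g t - K) * Real.exp (F t)) (Icc 0 T) :=
      (hgc.sub continuousOn_const).mul (Real.continuous_exp.comp_continuousOn hFc)
    have hd : ∀ x ∈ Ico (0:ℝ) T,
        HasDerivWithinAt (fun t => (g t - K) * Real.exp (F t)) 0 (Ici x) x := by
      intro x hx
      have hgx : HasDerivAt g (-(g x) ^ 2 + K ^ 2) x := hderiv x ⟨hx.1, hx.2.le⟩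
      have h1 : HasDerivWithinAt (fun t => g t - K) (-(g x) ^ 2 + K ^ 2) (Ici x) x :=
        (hgx.sub_const K).hasDerivWithinAt
      have h2 : HasDerivWithinAt (fun t => Real.exp (F t)) (Real.exp (F x) * f x) (Ici x) x :=
        (hFderiv x hx).exp
      have := h1.fun_mul h2
      refine this.congr_deriv ?_
      simp only [hf]
      ring
    intro t ht
    have := constant_of_has_deriv_right_zero hcont hd t ht
    simpa [hFdef, intervalIntegral.integral_same] using this
  have hgtK : ∀ t ∈ Icc (0:ℝ) T, K < g t := by
    intro t ht
    have h1 := hA t ht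
    have h2 : (0:ℝ) < Real.exp (F t) := Real.exp_pos _
    nlinarith [hg0]
  -- Step B: u = (g - K)⁻¹ satisfies u' = 1 + 2K u ≥ 1 + 2u; compare with (e^{2t}-1)/2
  set u : ℝ → ℝ := fun t => (g t - K)⁻¹ with hu
  set ψ : ℝ → ℝ := fun t => (u t - (Real.exp (2 * t) - 1) / 2) * Real.exp (-(2 * t)) with hψ
  have hψderiv : ∀ x ∈ Ioo (0:ℝ) T,
      HasDerivAt ψ (Real.exp (-(2 * x)) * (2 * (K - 1) / (g x - K))) x := by
    intro x hx
    have hxmem : x ∈ Icc (0:ℝ) T := ⟨hx.1.le, hx.2.le⟩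
    have hgx : HasDerivAt g (-(g x) ^ 2 + K ^ 2) x := hderiv x hxmem
    have hne : g x - K ≠ 0 := sub_ne_zero.mpr (hgtK x hxmem).ne'
    have hud : HasDerivAt u (-(-(g x) ^ 2 + K ^ 2) / (g x - K) ^ 2) x :=
      (hgx.sub_const K).inv hne
    have hvd : HasDerivAt (fun t => (Real.exp (2 * t) - 1) / 2) (Real.exp (2 * x) * 2 / 2) x := by
      have := ((((hasDerivAt_id x).const_mul 2).exp).sub_const 1).div_const 2
      simpa using this
    have hed : HasDerivAt (fun t => Real.exp (-(2 * t))) (Real.exp (-(2 * x)) * (-2)) x := by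
      have := (((hasDerivAt_id x).const_mul 2).neg).exp
      simpa using this
    have := (hud.fun_sub hvd).fun_mul hed
    refine this.congr_deriv ?_
    have hsq : (g x - K) ^ 2 ≠ 0 := pow_ne_zero _ hne
    simp only [hu]
    field_simp
    ring
  have hmono : MonotoneOn ψ (Icc 0 T) := by
    apply monotoneOn_of_deriv_nonneg (convex_Icc 0 T)
    · -- continuity
      have huc : ContinuousOn u (Icc 0 T) := by
        apply ContinuousOn.inv₀ (hgc.sub continuousOn_const)
        intro x hx
        exact sub_ne_zero.mpr (hgtK x hx).ne'
      exact ((huc.sub (by fun_prop)).mul (by fun_prop))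
    · rw [interior_Icc]
      intro x hx
      exact (hψderiv x hx).differentiableAt.differentiableWithinAt
    · rw [interior_Icc]
      intro x hx
      rw [(hψderiv x hx).deriv]
      have h1 : (0:ℝ) < Real.exp (-(2 * x)) := Real.exp_pos _
      have h2 : (0:ℝ) < g x - K := sub_pos.mpr (hgtK x ⟨hx.1.le, hx.2.le⟩)
      have h3 : (0:ℝ) ≤ K - 1 := by linarith
      exact mul_nonneg h1.le (div_nonneg (by linarith) h2.le)
  -- conclude
  intro t ht
  have htC : t ∈ Icc (0:ℝ) T := ⟨le_trans (by linarith) ht.1, ht.2⟩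
  have h0C : (0:ℝ) ∈ Icc (0:ℝ) T := ⟨le_rfl, hT.le⟩
  have hψ0 : ψ 0 = u 0 := by simp [hψ]
  have hu0pos : 0 < u 0 := by
    rw [hu]
    exact inv_pos.mpr (sub_pos.mpr hg0)
  have hmt := hmono h0C htC (le_trans (by linarith) ht.1)
  rw [hψ0] at hmt
  simp only [hψ] at hmt
  have hept : (0:ℝ) < Real.exp (-(2 * t)) := Real.exp_pos _
  have hut : (Real.exp (2 * t) - 1) / 2 < u t := by
    nlinarith [hmt, hu0pos, hept]
  have heT : Real.exp T ≤ Real.exp (2 * t) := Real.exp_le_exp.mpr (by linarith [ht.1])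
  have heT1 : (1:ℝ) < Real.exp T := by
    rw [show (1:ℝ) = Real.exp 0 by simp]
    exact Real.exp_lt_exp.mpr hT
  have hutpos : 0 < u t := lt_of_le_of_lt (by nlinarith) hut
  have hgt : g t - K = (u t)⁻¹ := by
    rw [hu, inv_inv]
  have hub : (u t)⁻¹ ≤ 2 * (Real.exp T - 1)⁻¹ := by
    rw [show 2 * (Real.exp T - 1)⁻¹ = ((Real.exp T - 1) / 2)⁻¹ by
      rw [inv_div]; ring]
    apply inv_anti₀ (by linarith)
    linarith [hut, heT]
  have hKpos : (0:ℝ) < K := lt_of_lt_of_le one_pos hK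
  have hfin : g t ≤ K + 2 * (Real.exp T - 1)⁻¹ := by
    rw [← sub_le_iff_le_add']
    calc g t - K = (u t)⁻¹ := hgt
      _ ≤ _ := hub
  have hinvpos : (0:ℝ) < (Real.exp T - 1)⁻¹ := inv_pos.mpr (by linarith)
  nlinarith [hfin, hinvpos, hK]
end

section
/- Let x ∈ H with Fourier expansion x = Σ_{k∈ℤ∖{0}} x_k e_k where e_k(ξ) = e^{2πikξ}, and suppose Σ_k γ_k |x_k|² < ∞ where γ_k = 4π²k². Then ‖x‖_{L⁴(𝕋)}⁴ ≤ ‖x‖_V² · ‖x‖_H², where ‖x‖_V² = Σ_k γ_k|x_k|² and ‖x‖_H² = Σ_k |x_k|². -/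
open MeasureTheory Real AddCircle

set_option maxHeartbeats 1000000 in
/-- Gagliardo–Nirenberg interpolation on the torus: ‖x‖_{L⁴}⁴ ≤ ‖x‖_V² ‖x‖_H²,
where the V- and H-norms are expressed via Fourier coefficients, γ_k = 4π²k². -/
theorem stmt_6 (x : AddCircle (1 : ℝ) → ℝ) (hx : Measurable x)
    (hx4 : MemLp x 4 (volume : Measure (AddCircle (1 : ℝ))))
    (c : ℤ → ℂ) (hc : c = fourierCoeff (fun ξ => (x ξ : ℂ)))
    (hmean : c 0 = 0)
    (γ : ℤ → ℝ) (hγ : ∀ k : ℤ, γ k = 4 * π ^ 2 * (k : ℝ) ^ 2)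
    (hV : Summable fun k : ℤ => γ k * ‖c k‖ ^ 2) :
    (∫ ξ, (x ξ) ^ 4) ≤ (∑' k : ℤ, γ k * ‖c k‖ ^ 2) * ∑' k : ℤ, ‖c k‖ ^ 2 := by
  have hvol : (volume : Measure (AddCircle (1:ℝ))) = haarAddCircle := by
    rw [volume_eq_smul_haarAddCircle]; simp
  set f : AddCircle (1:ℝ) → ℂ := fun ξ => (x ξ : ℂ) with hf
  -- γ basics
  have hγ0 : γ 0 = 0 := by simp [hγ]
  have hγnonneg : ∀ k, 0 ≤ γ k := fun k => by
    rw [hγ]; positivity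
  have hγpos : ∀ k : ℤ, k ≠ 0 → 0 < γ k := fun k hk => by
    rw [hγ]
    have : (k:ℝ) ≠ 0 := Int.cast_ne_zero.mpr hk
    positivity
  -- sum of inverses of γ
  have hSnat : HasSum (fun n : ℕ => (γ (n:ℤ))⁻¹) (1/24 : ℝ) := by
    have h0 := hasSum_zeta_two.mul_left ((4 * π ^ 2)⁻¹)
    have heq : (fun n : ℕ => (4 * π ^ 2)⁻¹ * (1 / (n:ℝ) ^ 2)) = fun n : ℕ => (γ (n:ℤ))⁻¹ := by
      funext n
      rw [hγ]
      push_cast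
      rw [mul_inv]
      ring
    rw [heq] at h0
    convert h0 using 1
    · rfl
    have hpi : (π:ℝ) ≠ 0 := pi_ne_zero
    field_simp
    ring
  have hSneg : HasSum (fun n : ℕ => (γ (-(n:ℤ)))⁻¹) (1/24 : ℝ) := by
    have : (fun n : ℕ => (γ (-(n:ℤ)))⁻¹) = fun n : ℕ => (γ (n:ℤ))⁻¹ := by
      funext n; rw [hγ, hγ]; push_cast; ring_nf
    rw [this]; exact hSnat
  have hS : HasSum (fun k : ℤ => (γ k)⁻¹) (1/12 : ℝ) := by
    have h := HasSum.of_nat_of_neg (f := fun k : ℤ => (γ k)⁻¹) hSnat hSneg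
    have he : (1/24 + 1/24 - (γ (0:ℤ))⁻¹ : ℝ) = 1/12 := by
      rw [hγ0]; norm_num
    rwa [he] at h
  -- summability of ‖c ·‖
  have hkey : ∀ k : ℤ, ‖c k‖ ≤ ((γ k)⁻¹ + γ k * ‖c k‖ ^ 2) / 2 := by
    intro k
    by_cases hk : k = 0
    · simp [hk, hmean, hγ0]
    · have hg := hγpos k hk
      have h1 : (γ k)⁻¹ * γ k = 1 := inv_mul_cancel₀ hg.ne'
      have h2 : (0:ℝ) ≤ (γ k)⁻¹ := inv_nonneg.mpr hg.le
      nlinarith [sq_nonneg (γ k * ‖c k‖ - 1), norm_nonneg (c k), hg]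
  have hsc : Summable fun k : ℤ => ‖c k‖ := by
    refine Summable.of_nonneg_of_le (fun k => norm_nonneg _) hkey ?_
    exact (hS.summable.add hV).div_const 2
  set M : ℝ := ∑' k : ℤ, ‖c k‖ with hM
  set V : ℝ := ∑' k : ℤ, γ k * ‖c k‖ ^ 2 with hVdef
  have hVnonneg : 0 ≤ V := tsum_nonneg fun k => mul_nonneg (hγnonneg k) (sq_nonneg _)
  -- Cauchy-Schwarz: M^2 ≤ (1/12) * V
  have hMsq : M ^ 2 ≤ (1/12) * V := by
    have hCS : ∀ s : Finset ℤ, (∑ k ∈ s, ‖c k‖) ≤ Real.sqrt ((1/12) * V) := by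
      intro s
      have hterm : ∀ k : ℤ, ‖c k‖ = Real.sqrt ((γ k)⁻¹) * Real.sqrt (γ k * ‖c k‖ ^ 2) := by
        intro k
        by_cases hk : k = 0
        · simp [hk, hmean, hγ0]
        · have hg := hγpos k hk
          rw [← Real.sqrt_mul (inv_nonneg.mpr hg.le), ← mul_assoc,
            inv_mul_cancel₀ hg.ne', one_mul, Real.sqrt_sq (norm_nonneg _)]
      have h1 : (∑ k ∈ s, ‖c k‖) ^ 2 ≤
          (∑ k ∈ s, (γ k)⁻¹) * (∑ k ∈ s, γ k * ‖c k‖ ^ 2) := by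
        calc (∑ k ∈ s, ‖c k‖) ^ 2
            = (∑ k ∈ s, Real.sqrt ((γ k)⁻¹) * Real.sqrt (γ k * ‖c k‖ ^ 2)) ^ 2 := by
              simp_rw [← hterm]
          _ ≤ (∑ k ∈ s, Real.sqrt ((γ k)⁻¹) ^ 2) * (∑ k ∈ s, Real.sqrt (γ k * ‖c k‖ ^ 2) ^ 2) :=
              Finset.sum_mul_sq_le_sq_mul_sq s _ _
          _ = (∑ k ∈ s, (γ k)⁻¹) * (∑ k ∈ s, γ k * ‖c k‖ ^ 2) := by
              congr 1
              · exact Finset.sum_congr rfl fun k _ =>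
                  Real.sq_sqrt (inv_nonneg.mpr (hγnonneg k))
              · exact Finset.sum_congr rfl fun k _ =>
                  Real.sq_sqrt (mul_nonneg (hγnonneg k) (sq_nonneg _))
      have h2 : (∑ k ∈ s, (γ k)⁻¹) ≤ 1/12 :=
        hS.tsum_eq ▸ Summable.sum_le_tsum s (fun k _ => inv_nonneg.mpr (hγnonneg k)) hS.summable
      have h3 : (∑ k ∈ s, γ k * ‖c k‖ ^ 2) ≤ V :=
        Summable.sum_le_tsum s (fun k _ => mul_nonneg (hγnonneg k) (sq_nonneg _)) hV
      have h4 : (∑ k ∈ s, ‖c k‖) ^ 2 ≤ (1/12) * V := by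
        refine h1.trans (mul_le_mul h2 h3 (Finset.sum_nonneg fun k _ =>
          mul_nonneg (hγnonneg k) (sq_nonneg _)) (by norm_num))
      have h5 : (0:ℝ) ≤ ∑ k ∈ s, ‖c k‖ := Finset.sum_nonneg fun k _ => norm_nonneg _
      have h6 : (0:ℝ) ≤ (1/12) * V :=
        mul_nonneg (by norm_num) (tsum_nonneg fun k => mul_nonneg (hγnonneg k) (sq_nonneg _))
      exact (Real.le_sqrt h5 h6).mpr h4
    have hMle : M ≤ Real.sqrt ((1/12) * V) := Summable.tsum_le_of_sum_le hsc hCS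
    have hM0 : 0 ≤ M := tsum_nonneg fun k => norm_nonneg _
    calc M ^ 2 ≤ Real.sqrt ((1/12) * V) ^ 2 := by
          exact pow_le_pow_left₀ hM0 hMle 2
      _ = (1/12) * V := Real.sq_sqrt (mul_nonneg (by norm_num) hVnonneg)
  have hMsqV : M ^ 2 ≤ V := hMsq.trans (by linarith)
  -- the continuous function g given by the Fourier series
  have hgsummable : Summable (fun i : ℤ => c i • (fourier i : C(AddCircle (1:ℝ), ℂ))) := by
    refine Summable.of_norm ?_
    have : (fun i : ℤ => ‖c i • (fourier i : C(AddCircle (1:ℝ), ℂ))‖) = fun i => ‖c i‖ := by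
      funext i
      rw [norm_smul (α := ℂ) (β := C(AddCircle (1:ℝ), ℂ)) (c i) (fourier i),
        fourier_norm, mul_one]
    rw [this]; exact hsc
  set g : C(AddCircle (1:ℝ), ℂ) := ∑' i : ℤ, c i • (fourier i : C(AddCircle (1:ℝ), ℂ)) with hg
  have hgsum : HasSum (fun i : ℤ => c i • (fourier i : C(AddCircle (1:ℝ), ℂ))) g :=
    hgsummable.hasSum
  have hfouriernorm : ∀ (i : ℤ) (ξ : AddCircle (1:ℝ)), ‖(fourier i : C(AddCircle (1:ℝ), ℂ)) ξ‖ = 1 := by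
    intro i ξ
    rw [fourier_apply, Circle.norm_coe]
  have hptnorm : ∀ (i : ℤ) (ξ : AddCircle (1:ℝ)), ‖(c i • (fourier i : C(AddCircle (1:ℝ), ℂ))) ξ‖ = ‖c i‖ := by
    intro i ξ
    rw [ContinuousMap.smul_apply, norm_smul, hfouriernorm, mul_one]
  have hgbound : ∀ ξ : AddCircle (1:ℝ), ‖g ξ‖ ≤ M := by
    intro ξ
    have hp : HasSum (fun i : ℤ => (c i • (fourier i : C(AddCircle (1:ℝ), ℂ))) ξ) (g ξ) := by
      have h := (ContinuousMap.evalCLM ℂ (M := ℂ) ξ).hasSum hgsum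
      exact h
    have hsn : Summable (fun i : ℤ => ‖(c i • (fourier i : C(AddCircle (1:ℝ), ℂ))) ξ‖) := by
      have : (fun i : ℤ => ‖(c i • (fourier i : C(AddCircle (1:ℝ), ℂ))) ξ‖) = fun i => ‖c i‖ := by
        funext i; exact hptnorm i ξ
      rw [this]; exact hsc
    calc ‖g ξ‖ = ‖∑' i : ℤ, (c i • (fourier i : C(AddCircle (1:ℝ), ℂ))) ξ‖ := by rw [hp.tsum_eq]
      _ ≤ ∑' i : ℤ, ‖(c i • (fourier i : C(AddCircle (1:ℝ), ℂ))) ξ‖ := norm_tsum_le_tsum_norm hsn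
      _ = M := tsum_congr fun i => hptnorm i ξ
  -- Memℒp and Lp elements
  have hx4c : MemLp f 4 (volume : Measure (AddCircle (1:ℝ))) := hx4.ofReal
  have hx2c : MemLp f 2 (haarAddCircle : Measure (AddCircle (1:ℝ))) := by
    rw [← hvol]
    exact hx4c.mono_exponent (by norm_num)
  set X : Lp ℂ 2 (haarAddCircle : Measure (AddCircle (1:ℝ))) := hx2c.toLp f with hXdef
  have hXcoe : (X : AddCircle (1:ℝ) → ℂ) =ᵐ[(haarAddCircle : Measure (AddCircle (1:ℝ)))] f :=
    hx2c.coeFn_toLp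
  have hXc : ∀ n : ℤ, fourierCoeff (X : AddCircle (1:ℝ) → ℂ) n = c n := by
    intro n
    rw [hc]
    exact integral_congr_ae (hXcoe.mono fun t ht => by simp only [ht])
  set G : Lp ℂ 2 (haarAddCircle : Measure (AddCircle (1:ℝ))) :=
    ContinuousMap.toLp (E := ℂ) 2 haarAddCircle ℂ g with hGdef
  have hGsum : HasSum (fun i : ℤ => c i • fourierLp (T := 1) 2 i) G := by
    have h := (ContinuousMap.toLp (E := ℂ) 2 haarAddCircle ℂ).hasSum hgsum
    simpa only [_root_.map_smul] using h
  have hXsum : HasSum (fun i : ℤ => c i • fourierLp (T := 1) 2 i) X := by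
    have h := hasSum_fourier_series_L2 X
    simpa only [hXc] using h
  have hXG : X = G := hXsum.unique hGsum
  have hae : f =ᵐ[(haarAddCircle : Measure (AddCircle (1:ℝ)))] ⇑g := by
    have h1 : (X : AddCircle (1:ℝ) → ℂ) =ᵐ[haarAddCircle] f := hXcoe
    have h2 : (G : AddCircle (1:ℝ) → ℂ) =ᵐ[haarAddCircle] ⇑g :=
      ContinuousMap.coeFn_toLp haarAddCircle g
    exact h1.symm.trans (hXG ▸ h2)
  -- a.e. bound on x
  have hM0 : 0 ≤ M := tsum_nonneg fun k => norm_nonneg _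
  have hxaebound : ∀ᵐ ξ ∂(volume : Measure (AddCircle (1:ℝ))), |x ξ| ≤ M := by
    rw [hvol]
    filter_upwards [hae] with ξ hξ
    have hnx : ‖f ξ‖ = |x ξ| := by rw [hf]; exact Complex.norm_real _
    rw [← hnx, hξ]
    exact hgbound ξ
  -- Parseval
  have hParseval : (∫ ξ, (x ξ)^2) = ∑' k : ℤ, ‖c k‖^2 := by
    have hp := tsum_sq_fourierCoeff X
    simp_rw [hXc] at hp
    have hint : (∫ t, ‖(X : AddCircle (1:ℝ) → ℂ) t‖^2 ∂haarAddCircle) = ∫ ξ, (x ξ)^2 ∂haarAddCircle := by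
      refine integral_congr_ae (hXcoe.mono fun t ht => ?_)
      simp only [ht, hf, Complex.norm_real, Real.norm_eq_abs, sq_abs]
    rw [hp, hint, hvol]
  -- integrability
  have hmx2 : AEStronglyMeasurable (fun ξ => (x ξ)^2) (volume : Measure (AddCircle (1:ℝ))) :=
    ((hx.pow_const 2)).aestronglyMeasurable
  have hmx4 : AEStronglyMeasurable (fun ξ => (x ξ)^4) (volume : Measure (AddCircle (1:ℝ))) :=
    ((hx.pow_const 4)).aestronglyMeasurable
  have hint4 : Integrable (fun ξ => (x ξ)^4) (volume : Measure (AddCircle (1:ℝ))) := by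
    refine Integrable.mono' (integrable_const (M^4)) hmx4 ?_
    filter_upwards [hxaebound] with ξ h
    rw [Real.norm_eq_abs, abs_pow]
    exact pow_le_pow_left₀ (abs_nonneg _) h 4
  have hint2 : Integrable (fun ξ => (x ξ)^2) (volume : Measure (AddCircle (1:ℝ))) := by
    refine Integrable.mono' (integrable_const (M^2)) hmx2 ?_
    filter_upwards [hxaebound] with ξ h
    rw [Real.norm_eq_abs, abs_pow]
    exact pow_le_pow_left₀ (abs_nonneg _) h 2
  have hstep : (∫ ξ, (x ξ)^4) ≤ ∫ ξ, M^2 * (x ξ)^2 := by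
    refine integral_mono_ae hint4 (hint2.const_mul (M^2)) ?_
    filter_upwards [hxaebound] with ξ h
    have hx2leM2 : (x ξ)^2 ≤ M^2 := by nlinarith [sq_abs (x ξ), abs_nonneg (x ξ)]
    nlinarith [mul_nonneg (sq_nonneg (x ξ)) (sub_nonneg.mpr hx2leM2)]
  have hHnonneg : (0:ℝ) ≤ ∑' k : ℤ, ‖c k‖^2 := tsum_nonneg fun k => sq_nonneg _
  calc (∫ ξ, (x ξ)^4) ≤ ∫ ξ, M^2 * (x ξ)^2 := hstep
    _ = M^2 * ∫ ξ, (x ξ)^2 := integral_const_mul _ _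
    _ = M^2 * ∑' k : ℤ, ‖c k‖^2 := by rw [hParseval]
    _ ≤ V * ∑' k : ℤ, ‖c k‖^2 := mul_le_mul_of_nonneg_right hMsqV hHnonneg
end
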